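/- Let Γ be a group and N ≤ Γ a finite index subgroup. If φ : Γ → Γ is an injective homomorphism such that φ restricted to N is conjugation by some fixed element f of a group M ⊇ Γ (i.e., φ(n) = fnf⁻¹ for all n ∈ N), Γ is normal in M, and the centralizer of every finite index subgroup of Γ in M is trivial, then φ(x) = fxf⁻¹ for all x ∈ Γ. -/

import Mathlib

/-- Γ ⊴ M, N ≤ Γ of finite index, centralizers in M of finite index
subgroups of Γ are trivial. If φ : Γ → Γ is an injective homomorphism agreeing with
conjugation by f ∈ M on N, then φ is conjugation by f on all of Γ. -/
theorem stmt18 (M : Type*) [Group M] (Γ : Subgroup M) [Γ.Normal]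
    (N : Subgroup M) (hNΓ : N ≤ Γ) (hNfi : (N.subgroupOf Γ).FiniteIndex)
    (hcen : ∀ K : Subgroup M, K ≤ Γ → (K.subgroupOf Γ).FiniteIndex →
      ∀ m : M, (∀ k ∈ K, m * k = k * m) → m = 1)
    (φ : Γ →* Γ) (hφ : Function.Injective φ)
    (f : M) (hf : ∀ n : M, ∀ hn : n ∈ N, ((φ ⟨n, hNΓ hn⟩ : Γ) : M) = f * n * f⁻¹) :
    ∀ x : Γ, ((φ x : Γ) : M) = f * (x : M) * f⁻¹ := by
  intro x
  -- The finite index subgroup K = N ⊓ xNx⁻¹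
  set c : M ≃* M := MulAut.conj (x : M) with hc
  set K : Subgroup M := N ⊓ N.map c.toMonoidHom with hK
  have hmapΓ : Subgroup.map c.toMonoidHom Γ = Γ := by
    apply le_antisymm
    · rintro m ⟨g, hg, rfl⟩
      exact Subgroup.Normal.conj_mem ‹Γ.Normal› g hg (x : M)
    · intro m hm
      refine ⟨(x : M)⁻¹ * m * (x : M), ?_, by simp [hc, MulAut.conj, mul_assoc]⟩
      simpa [mul_assoc] using Subgroup.Normal.conj_mem ‹Γ.Normal› m hm (x : M)⁻¹
  have hKΓ : K ≤ Γ := inf_le_left.trans hNΓ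
  have hrelN : N.relIndex Γ ≠ 0 := hNfi.index_ne_zero
  have hrelmap : (N.map c.toMonoidHom).relIndex Γ ≠ 0 := by
    have h1 : N.map c.toMonoidHom = N.comap c.symm.toMonoidHom :=
      Subgroup.map_equiv_eq_comap_symm c N
    rw [h1, Subgroup.relIndex_comap]
    have h2 : Subgroup.map c.symm.toMonoidHom Γ = Γ := by
      rw [Subgroup.map_equiv_eq_comap_symm' c.symm, MulEquiv.symm_symm]
      ext m
      simp only [Subgroup.mem_comap, hc, MulEquiv.coe_toMonoidHom, MulAut.conj_apply]
      constructor
      · intro h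
        have h2 := Subgroup.Normal.conj_mem ‹Γ.Normal› _ h (x : M)⁻¹
        simpa [mul_assoc] using h2
      · intro h
        exact Subgroup.Normal.conj_mem ‹Γ.Normal› m h (x : M)
    rw [h2]
    exact hrelN
  have hKfi : (K.subgroupOf Γ).FiniteIndex :=
    ⟨Subgroup.relIndex_inf_ne_zero hrelN hrelmap⟩
  -- the centralizing element
  set m : M := f⁻¹ * ((φ x : Γ) : M) * f * (x : M)⁻¹ with hm
  have hcomm : ∀ k ∈ K, m * k = k * m := by
    intro k hk
    obtain ⟨hk1, n, hn, hnk⟩ := hk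
    have hne : (n : M) = (x : M)⁻¹ * k * (x : M) := by
      have : (x : M) * n * (x : M)⁻¹ = k := hnk
      rw [← this]; group
    -- φ(x⁻¹ k x) computed two ways
    have hsub : (⟨n, hNΓ hn⟩ : Γ) = x⁻¹ * ⟨k, hNΓ hk1⟩ * x := by
      ext; simp [hne]
    have h1 : ((φ ⟨n, hNΓ hn⟩ : Γ) : M) = f * n * f⁻¹ := hf n hn
    have h2 : ((φ ⟨k, hNΓ hk1⟩ : Γ) : M) = f * k * f⁻¹ := hf k hk1
    have h3 : ((φ ⟨n, hNΓ hn⟩ : Γ) : M)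
        = ((φ x : Γ) : M)⁻¹ * (f * k * f⁻¹) * ((φ x : Γ) : M) := by
      rw [hsub, map_mul, map_mul, map_inv]
      push_cast
      rw [h2]
    have e : (x : M)⁻¹ * k * (x : M)
        = f⁻¹ * (((φ x : Γ) : M)⁻¹ * (f * k * f⁻¹) * ((φ x : Γ) : M)) * f := by
      rw [← h3, h1, hne]; group
    calc m * k = f⁻¹ * ((φ x : Γ) : M) * f * ((x : M)⁻¹ * k * (x : M)) * (x : M)⁻¹ := by
          rw [hm]; group
      _ = f⁻¹ * ((φ x : Γ) : M) * f *
            (f⁻¹ * (((φ x : Γ) : M)⁻¹ * (f * k * f⁻¹) * ((φ x : Γ) : M)) * f) * (x : M)⁻¹ := by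
          rw [e]
      _ = k * m := by rw [hm]; group
  have hm1 : m = 1 := hcen K hKΓ hKfi m hcomm
  have : f⁻¹ * ((φ x : Γ) : M) * f * (x : M)⁻¹ = 1 := hm1
  calc ((φ x : Γ) : M)
      = f * (f⁻¹ * ((φ x : Γ) : M) * f * (x : M)⁻¹) * (x : M) * f⁻¹ := by group
    _ = f * 1 * (x : M) * f⁻¹ := by rw [this]
    _ = f * (x : M) * f⁻¹ := by group
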